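/- If X and Y are n×k real matrices with X^T X = I_k and Y^T Y = I_k, and z is a unit vector in R^k, then ‖(I_k + X^T Y) z‖₂² ≥ 3 - ‖X - Y‖_F², where ‖·‖_F denotes the Frobenius norm. -/

import Mathlib

open Matrix

/-- Squared Frobenius norm of a matrix. -/
noncomputable def frobSq {n k : ℕ} (A : Matrix (Fin n) (Fin k) ℝ) : ℝ :=
  ∑ i, ∑ j, (A i j) ^ 2

/-- Euclidean norm of a vector. -/
noncomputable def enorm {k : ℕ} (v : Fin k → ℝ) : ℝ :=
  Real.sqrt (∑ i, (v i) ^ 2)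

theorem stmt0 {n k : ℕ} (X Y : Matrix (Fin n) (Fin k) ℝ)
    (hX : Xᵀ * X = 1) (hY : Yᵀ * Y = 1)
    (z : Fin k → ℝ) (hz : _root_.enorm z = 1) :
    _root_.enorm ((1 + Xᵀ * Y).mulVec z) ^ 2 ≥ 3 - frobSq (X - Y) := by
  have hz1 : ∑ i, z i ^ 2 = 1 := by
    have h0 : (0:ℝ) ≤ ∑ i, z i ^ 2 := Finset.sum_nonneg fun i _ => sq_nonneg _
    have := Real.sq_sqrt h0
    unfold _root_.enorm at hz
    nlinarith
  have esq : ∀ {m : ℕ} (v : Fin m → ℝ), _root_.enorm v ^ 2 = v ⬝ᵥ v := by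
    intro m v
    unfold _root_.enorm
    rw [Real.sq_sqrt (Finset.sum_nonneg fun i _ => sq_nonneg _)]
    simp [dotProduct, sq]
  have dnn : ∀ {m : ℕ} (v : Fin m → ℝ), 0 ≤ v ⬝ᵥ v := by
    intro m v
    simp only [dotProduct]
    exact Finset.sum_nonneg fun i _ => mul_self_nonneg _
  have key : ∀ (B C : Matrix (Fin n) (Fin k) ℝ),
      (B.mulVec z) ⬝ᵥ (C.mulVec z) = z ⬝ᵥ ((Bᵀ * C).mulVec z) := by
    intro B C
    rw [← Matrix.mulVec_mulVec, Matrix.dotProduct_mulVec z, Matrix.vecMul_transpose,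
      Matrix.dotProduct_mulVec]
  have hzz : z ⬝ᵥ z = 1 := by simp [dotProduct, ← sq, hz1]
  have hxx : (X.mulVec z) ⬝ᵥ (X.mulVec z) = 1 := by
    rw [key, hX, Matrix.one_mulVec, hzz]
  have hyy : (Y.mulVec z) ⬝ᵥ (Y.mulVec z) = 1 := by
    rw [key, hY, Matrix.one_mulVec, hzz]
  have hxy : (X.mulVec z) ⬝ᵥ (Y.mulVec z) = z ⬝ᵥ ((Xᵀ * Y).mulVec z) := key X Y
  -- Cauchy–Schwarz rowwise
  have hCS : ((X - Y).mulVec z) ⬝ᵥ ((X - Y).mulVec z) ≤ frobSq (X - Y) := by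
    have hterm : ∀ i, ((X - Y).mulVec z i) * ((X - Y).mulVec z i) ≤ ∑ j, ((X - Y) i j) ^ 2 := by
      intro i
      have h1 : (X - Y).mulVec z i = ∑ j, (X - Y) i j * z j := by
        simp [Matrix.mulVec, dotProduct]
      calc ((X - Y).mulVec z i) * ((X - Y).mulVec z i)
          = (∑ j, (X - Y) i j * z j) ^ 2 := by rw [h1, sq]
        _ ≤ (∑ j, ((X - Y) i j) ^ 2) * (∑ j, (z j) ^ 2) :=
            Finset.sum_mul_sq_le_sq_mul_sq _ _ _
        _ = ∑ j, ((X - Y) i j) ^ 2 := by rw [hz1, mul_one]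
    simp only [dotProduct, frobSq]
    exact Finset.sum_le_sum fun i _ => hterm i
  have hsub : ((X - Y).mulVec z) ⬝ᵥ ((X - Y).mulVec z)
      = 2 - 2 * ((X.mulVec z) ⬝ᵥ (Y.mulVec z)) := by
    rw [Matrix.sub_mulVec]
    rw [sub_dotProduct, dotProduct_sub, dotProduct_sub]
    rw [hxx, hyy, dotProduct_comm (Y.mulVec z) (X.mulVec z)]
    ring
  -- expand the goal
  rw [esq, Matrix.add_mulVec, Matrix.one_mulVec]
  set w := (Xᵀ * Y).mulVec z with hw
  have hexp : (z + w) ⬝ᵥ (z + w) = z ⬝ᵥ z + 2 * (z ⬝ᵥ w) + w ⬝ᵥ w := by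
    rw [add_dotProduct, dotProduct_add, dotProduct_add,
      dotProduct_comm w z]
    ring
  have hwnn := dnn w
  rw [hexp, hzz]
  rw [hxy] at hsub
  linarith
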